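/- For every dimension d ≥ 1 and every θ ∈ (0,1], there exists a constant C > 0, depending only on d and θ, such that for all x, y ∈ ℝ^d, all radii R > 0, ρ > 0 with θR ≤ ρ and closedBall(y,ρ) ⊆ closedBall(x,R), and every v : ℝ^d → ℝ continuously differentiable on an open set containing closedBall(x,R), one has ∫_{B(x,R)} (v(z) − ⟨v⟩_{B(y,ρ)})² dz ≤ C R² ∫_{B(x,R)} ‖∇v(z)‖² dz, where ⟨v⟩_{B(y,ρ)} is the mean value of v over B(y,ρ). (Poincaré-type inequality with the mean computed over a sub-ball: step (1) of the approximation lemma for the unfitted HHO interpolation operator, comparing a function on a neighborhood Δ(T) with its mean over the ball contained in the well-cut sub-cell.) -/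

import Mathlib

open MeasureTheory Metric Set

private lemma sq_average_le' {α : Type*} [MeasurableSpace α] {μ : Measure α}
    [IsFiniteMeasure μ] [NeZero μ] {f : α → ℝ}
    (hfi : Integrable f μ) (hf2 : Integrable (fun a => (f a)^2) μ) :
    (⨍ a, f a ∂μ)^2 ≤ ⨍ a, (f a)^2 ∂μ :=
  (Even.convexOn_pow even_two).map_average_le (continuous_pow 2).continuousOn
    isClosed_univ (Filter.Eventually.of_forall fun _ => trivial) hfi hf2

set_option maxHeartbeats 2000000 in
/-- Poincaré-type inequality with the mean computed over a sub-ball. -/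
theorem poincare_subball_mean
    (d : ℕ) (hd : 1 ≤ d) (θ : ℝ) (hθ : θ ∈ Set.Ioc (0 : ℝ) 1) :
    ∃ C : ℝ, 0 < C ∧
      ∀ (x y : EuclideanSpace ℝ (Fin d)) (R ρ : ℝ), 0 < R → 0 < ρ →
        θ * R ≤ ρ → closedBall y ρ ⊆ closedBall x R →
        ∀ (v : EuclideanSpace ℝ (Fin d) → ℝ) (U : Set (EuclideanSpace ℝ (Fin d))),
          IsOpen U → closedBall x R ⊆ U → ContDiffOn ℝ 1 v U →
          (∫ z in ball x R, (v z - ⨍ w in ball y ρ, v w) ^ 2) ≤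
            C * R ^ 2 * ∫ z in ball x R, ‖gradient v z‖ ^ 2 := by
  obtain ⟨hθ0, hθ1⟩ := hθ
  refine ⟨2^(d+2) / θ^d, by positivity, ?_⟩
  intro x y R ρ hR hρ hθR hsub v U hU hKU hv
  haveI : Nontrivial (EuclideanSpace ℝ (Fin d)) :=
    Module.nontrivial_of_finrank_pos (R := ℝ) (by simp [finrank_euclideanSpace_fin]; omega)
  -- basic sets
  set K : Set (EuclideanSpace ℝ (Fin d)) := closedBall x R with hKdef
  have hBRK : ball x R ⊆ K := ball_subset_closedBall
  have hBρK : ball y ρ ⊆ K := ball_subset_closedBall.trans hsub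
  have hKconv : Convex ℝ K := convex_closedBall x R
  have hKcomp : IsCompact K := isCompact_closedBall x R
  -- measures
  have ball_ae : (ball x R : Set (EuclideanSpace ℝ (Fin d))) =ᵐ[volume] K := by
    have h : (volume : Measure (EuclideanSpace ℝ (Fin d))) (K \ ball x R) = 0 :=
      measure_mono_null (fun z hz => by
        simp only [hKdef, mem_diff, mem_closedBall, mem_ball, not_lt, mem_sphere] at hz ⊢
        exact le_antisymm hz.1 hz.2) (Measure.addHaar_sphere volume x R)
    exact ae_eq_set.2 ⟨measure_mono_null
      (fun z hz => (hz.2 (hBRK hz.1)).elim) h, h⟩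
  have hvolρ_pos : 0 < (volume (ball y ρ)).toReal :=
    ENNReal.toReal_pos (measure_ball_pos _ _ hρ).ne' measure_ball_lt_top.ne
  have hvolR_pos : 0 < (volume (ball x R)).toReal :=
    ENNReal.toReal_pos (measure_ball_pos _ _ hR).ne' measure_ball_lt_top.ne
  have hvol_le : (volume (ball y ρ)).toReal ≤ (volume (ball x R)).toReal := by
    apply ENNReal.toReal_mono
    · exact measure_ball_lt_top.ne
    · calc volume (ball y ρ) ≤ volume K := measure_mono hBρK
        _ = volume (ball x R) := (measure_congr ball_ae).symm
  haveI hμ1fin : IsFiniteMeasure (volume.restrict (ball x R)) :=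
    ⟨by rw [Measure.restrict_apply_univ]; exact measure_ball_lt_top⟩
  haveI hμ2fin : IsFiniteMeasure (volume.restrict (ball y ρ)) :=
    ⟨by rw [Measure.restrict_apply_univ]; exact measure_ball_lt_top⟩
  haveI hμ2ne : NeZero (volume.restrict (ball y ρ)) :=
    ⟨fun h => (measure_ball_pos volume y hρ).ne' (by rwa [Measure.restrict_eq_zero] at h)⟩
  haveI hμtprob : IsProbabilityMeasure (volume.restrict (Ioc (0:ℝ) 1)) :=
    ⟨by rw [Measure.restrict_apply_univ, Real.volume_Ioc]; norm_num⟩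
  -- continuity of v and its gradient
  have hvU : ContinuousOn v U := hv.continuousOn
  have hfdc : ContinuousOn (fun u => fderiv ℝ v u) U :=
    hv.continuousOn_fderiv_of_isOpen hU le_rfl
  have hgradc : ContinuousOn (fun u => gradient v u) U :=
    (InnerProductSpace.toDual ℝ (EuclideanSpace ℝ (Fin d))).symm.continuous.comp_continuousOn hfdc
  set G : EuclideanSpace ℝ (Fin d) → ℝ := fun u => ‖gradient v u‖^2 with hGdef
  have hGc : ContinuousOn G K := ((hgradc.mono hKU).norm.pow 2)
  set g : EuclideanSpace ℝ (Fin d) → ℝ := K.indicator G with hgdef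
  have hg0 : ∀ u, 0 ≤ g u := fun u => indicator_nonneg (fun a _ => by positivity) u
  have hgK : ∀ u ∈ K, g u = ‖gradient v u‖^2 := fun u hu => indicator_of_mem hu G
  have hgmeas : Measurable g := by
    have h1 : Measurable (fun u => gradient v u) :=
      ((InnerProductSpace.toDual ℝ (EuclideanSpace ℝ (Fin d))).symm.continuous.measurable).comp (measurable_fderiv ℝ v)
    exact (h1.norm.pow_const 2).indicator measurableSet_closedBall
  obtain ⟨M0, hM0⟩ := hKcomp.exists_bound_of_continuousOn hGc
  set M : ℝ := max M0 0 with hMdef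
  have hM0' : 0 ≤ M := le_max_right _ _
  have hgM : ∀ u, g u ≤ M := by
    intro u; rw [hgdef]; classical
    by_cases h : u ∈ K
    · rw [indicator_of_mem h]
      exact le_max_of_le_left ((le_abs_self _).trans ((Real.norm_eq_abs _) ▸ hM0 u h))
    · rw [indicator_of_notMem h]; exact hM0'
  have hgnorm : ∀ u, ‖g u‖ ≤ M := fun u => by
    rw [Real.norm_eq_abs, abs_of_nonneg (hg0 u)]; exact hgM u
  have hgint : Integrable g volume := by
    rw [hgdef, integrable_indicator_iff measurableSet_closedBall]
    exact hGc.integrableOn_compact hKcomp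
  set J : ℝ := ∫ u, g u with hJdef
  have hJ0 : 0 ≤ J := integral_nonneg hg0
  have hJeq : (∫ z in ball x R, G z) = J := by
    rw [hJdef, hgdef, integral_indicator measurableSet_closedBall]
    exact setIntegral_congr_set ball_ae
  clear_value g G
  -- change of variables bound
  have cvint : ∀ (a : EuclideanSpace ℝ (Fin d)) (s : ℝ), s ≠ 0 →
      Integrable (fun u => g (a + s • u)) volume := by
    intro a s hs
    exact (hgint.comp_add_left a).comp_smul hs
  have cv : ∀ (a : EuclideanSpace ℝ (Fin d)) (s : ℝ), s ≠ 0 →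
      ∫ u, g (a + s • u) = |(s^d)⁻¹| * J := by
    intro a s hs
    have h1 := Measure.integral_comp_smul volume (fun u' => g (a + u')) s
    rw [finrank_euclideanSpace_fin] at h1
    rw [show (∫ u, g (a + s • u)) = ∫ u, (fun u' => g (a + u')) (s • u) from rfl, h1,
      integral_add_left_eq_self g a, smul_eq_mul, hJdef]
  have cvb : ∀ s : ℝ, 1/2 ≤ s → s ≤ 1 → |(s^d)⁻¹| ≤ 2^d := by
    intro s hs1 hs2
    have hsp : (0:ℝ) < s := by linarith
    have h1 : ((2:ℝ)^d)⁻¹ ≤ s^d := by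
      have h2 : ((2:ℝ)⁻¹)^d ≤ s^d := pow_le_pow_left₀ (by norm_num) (by linarith) d
      simpa [inv_pow] using h2
    rw [abs_of_nonneg (by positivity)]
    calc (s^d)⁻¹ ≤ (((2:ℝ)^d)⁻¹)⁻¹ := inv_anti₀ (by positivity) h1
      _ = 2^d := inv_inv _
  have setcv : ∀ (A : Set (EuclideanSpace ℝ (Fin d))) (a : EuclideanSpace ℝ (Fin d)) (s : ℝ),
      1/2 ≤ s → s ≤ 1 → ∫ u in A, g (a + s • u) ≤ 2^d * J := by
    intro A a s hs1 hs2
    have hs : s ≠ 0 := by intro h; rw [h] at hs1; norm_num at hs1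
    calc ∫ u in A, g (a + s • u)
        ≤ ∫ u, g (a + s • u) :=
          setIntegral_le_integral (cvint a s hs) (Filter.Eventually.of_forall fun u => hg0 _)
      _ = |(s^d)⁻¹| * J := cv a s hs
      _ ≤ 2^d * J := mul_le_mul_of_nonneg_right (cvb s hs1 hs2) hJ0
  -- affine rearrangement
  have rearr : ∀ (w z : EuclideanSpace ℝ (Fin d)) (t : ℝ),
      w + t • (z - w) = t • z + (1-t) • w := by
    intro w z t; module
  have hseg : ∀ z ∈ K, ∀ w ∈ K, ∀ t ∈ Icc (0:ℝ) 1, w + t • (z - w) ∈ K := by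
    intro z hz w hw t ht
    rw [rearr]
    rw [add_comm]
    exact hKconv hw hz (by linarith [ht.2]) ht.1 (by ring)
  -- pointwise FTC + Jensen bound
  have P : ∀ z ∈ K, ∀ w ∈ K,
      (v z - v w)^2 ≤ 4*R^2 * ∫ t in Ioc (0:ℝ) 1, g (w + t • (z - w)) := by
    intro z hz w hw
    set ψ : ℝ → ℝ := fun t => (fderiv ℝ v (w + t • (z - w))) (z - w) with hψdef
    have hsg : ∀ t ∈ Icc (0:ℝ) 1, w + t • (z - w) ∈ U := fun t ht =>
      hKU (hseg z hz w hw t ht)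
    have hψc : ContinuousOn ψ (Icc 0 1) := by
      have hl : ContinuousOn (fun t : ℝ => w + t • (z - w)) (Icc 0 1) :=
        (continuous_const.add (continuous_id.smul continuous_const)).continuousOn
      exact (ContinuousLinearMap.apply ℝ ℝ (z - w)).continuous.comp_continuousOn
        (hfdc.comp hl hsg)
    have ftc : v z - v w = ∫ t in (0:ℝ)..1, ψ t := by
      have hdrv : ∀ t ∈ uIcc (0:ℝ) 1, HasDerivAt (fun s => v (w + s • (z - w))) (ψ t) t := by
        intro t ht
        rw [uIcc_of_le zero_le_one] at ht
        have hdiff : DifferentiableAt ℝ v (w + t • (z - w)) :=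
          (hv.differentiableOn one_ne_zero).differentiableAt (hU.mem_nhds (hsg t ht))
        have hline : HasDerivAt (fun s : ℝ => w + s • (z - w)) (z - w) t := by
          simpa using ((hasDerivAt_id t).smul_const (z - w)).const_add w
        have h := hdiff.hasFDerivAt.comp_hasDerivAt t hline
        simpa [hψdef, map_sub, Function.comp_def] using h
      have := intervalIntegral.integral_eq_sub_of_hasDerivAt hdrv
        (hψc.intervalIntegrable_of_Icc zero_le_one)
      simpa using this.symm
    have h01 : v z - v w = ∫ t in Ioc (0:ℝ) 1, ψ t := by
      rw [ftc, intervalIntegral.integral_of_le zero_le_one]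
    have hψint : Integrable ψ (volume.restrict (Ioc (0:ℝ) 1)) :=
      (hψc.integrableOn_compact isCompact_Icc).mono_set Ioc_subset_Icc_self
    have hψ2int : Integrable (fun t => (ψ t)^2) (volume.restrict (Ioc (0:ℝ) 1)) :=
      ((hψc.pow 2).integrableOn_compact isCompact_Icc).mono_set Ioc_subset_Icc_self
    have jensen : (∫ t in Ioc (0:ℝ) 1, ψ t)^2 ≤ ∫ t in Ioc (0:ℝ) 1, (ψ t)^2 := by
      have := sq_average_le' hψint hψ2int
      rwa [average_eq_integral, average_eq_integral] at this
    have hlmeas : Measurable (fun t : ℝ => w + t • (z - w)) :=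
      (continuous_const.add (continuous_id.smul continuous_const)).measurable
    have hgl_int : Integrable (fun t => 4*R^2 * g (w + t • (z - w)))
        (volume.restrict (Ioc (0:ℝ) 1)) := by
      apply Integrable.mono' (integrable_const (4*R^2*M))
      · exact (((hgmeas.comp hlmeas).const_mul _).aestronglyMeasurable)
      · refine Filter.Eventually.of_forall fun t => ?_
        rw [Real.norm_eq_abs, abs_mul, abs_of_nonneg (hg0 _),
          abs_of_nonneg (by positivity : (0:ℝ) ≤ 4*R^2)]
        exact mul_le_mul_of_nonneg_left (hgM _) (by positivity)
    have hpt : ∀ t ∈ Ioc (0:ℝ) 1, (ψ t)^2 ≤ 4*R^2 * g (w + t • (z - w)) := by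
      intro t ht
      have htI : t ∈ Icc (0:ℝ) 1 := Ioc_subset_Icc_self ht
      have hpK : w + t • (z - w) ∈ K := hseg z hz w hw t htI
      have h1 : |ψ t| ≤ ‖fderiv ℝ v (w + t • (z - w))‖ * ‖z - w‖ :=
        (fderiv ℝ v (w + t • (z - w))).le_opNorm (z - w)
      have hzw : ‖z - w‖ ≤ 2*R := by
        have hz' : dist z x ≤ R := mem_closedBall.1 hz
        have hw' : dist w x ≤ R := mem_closedBall.1 hw
        calc ‖z - w‖ = dist z w := (dist_eq_norm z w).symm
          _ ≤ dist z x + dist x w := dist_triangle z x w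
          _ ≤ 2*R := by rw [dist_comm x w]; linarith
      have hgr : ‖fderiv ℝ v (w + t • (z - w))‖ = ‖gradient v (w + t • (z - w))‖ :=
        ((InnerProductSpace.toDual ℝ (EuclideanSpace ℝ (Fin d))).symm.norm_map _).symm
      have hgval : g (w + t • (z - w)) = ‖gradient v (w + t • (z - w))‖^2 := hgK _ hpK
      rw [hgval, ← hgr, ← sq_abs (ψ t)]
      have h2 : |ψ t| ≤ ‖fderiv ℝ v (w + t • (z - w))‖ * (2*R) :=
        h1.trans (mul_le_mul_of_nonneg_left hzw (norm_nonneg _))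
      calc |ψ t|^2 ≤ (‖fderiv ℝ v (w + t • (z - w))‖ * (2*R))^2 :=
            pow_le_pow_left₀ (abs_nonneg _) h2 2
        _ = 4*R^2 * ‖fderiv ℝ v (w + t • (z - w))‖^2 := by ring
    calc (v z - v w)^2 = (∫ t in Ioc (0:ℝ) 1, ψ t)^2 := by rw [h01]
      _ ≤ ∫ t in Ioc (0:ℝ) 1, (ψ t)^2 := jensen
      _ ≤ ∫ t in Ioc (0:ℝ) 1, 4*R^2 * g (w + t • (z - w)) := by
          apply integral_mono_of_nonneg (Filter.Eventually.of_forall fun t => sq_nonneg _)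
            hgl_int
          rw [Filter.EventuallyLE, ae_restrict_iff' measurableSet_Ioc]
          exact Filter.Eventually.of_forall hpt
      _ = 4*R^2 * ∫ t in Ioc (0:ℝ) 1, g (w + t • (z - w)) := integral_const_mul _ _
  -- Jensen step over the small ball
  have hvρint : IntegrableOn v (ball y ρ) :=
    ((hvU.mono (hsub.trans hKU)).integrableOn_compact (isCompact_closedBall y ρ)).mono_set
      ball_subset_closedBall
  have Q : ∀ z ∈ K, (v z - ⨍ w in ball y ρ, v w)^2 ≤
      (volume (ball y ρ)).toReal⁻¹ * ∫ w in ball y ρ, (v z - v w)^2 := by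
    intro z hz
    have hfint : Integrable (fun w => v z - v w) (volume.restrict (ball y ρ)) :=
      (integrable_const _).sub hvρint
    have hf2int : Integrable (fun w => (v z - v w)^2) (volume.restrict (ball y ρ)) := by
      have hc : ContinuousOn (fun w => (v z - v w)^2) (closedBall y ρ) :=
        ((continuousOn_const.sub (hvU.mono (hsub.trans hKU))).pow 2)
      exact (hc.integrableOn_compact (isCompact_closedBall y ρ)).mono_set ball_subset_closedBall
    have ha : (volume (ball y ρ)).toReal ≠ 0 := hvolρ_pos.ne'
    have havg : (⨍ w in ball y ρ, (v z - v w)) = v z - ⨍ w in ball y ρ, v w := by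
      rw [setAverage_eq, setAverage_eq, integral_sub (integrable_const _) hvρint,
        setIntegral_const, smul_eq_mul, smul_eq_mul, smul_eq_mul]
      have ha' : volume.real (ball y ρ) ≠ 0 := ha
      field_simp
    have hJen := sq_average_le' hfint hf2int
    rw [havg] at hJen
    exact hJen.trans (le_of_eq (by rw [setAverage_eq, smul_eq_mul]; rfl))
  -- measurability pack
  have hT1 : StronglyMeasurable (fun q : EuclideanSpace ℝ (Fin d) × EuclideanSpace ℝ (Fin d) =>
      ∫ t in Ioc (0:ℝ) 1, g (q.2 + t • (q.1 - q.2))) := by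
    have hΦ : Measurable (fun p : (EuclideanSpace ℝ (Fin d) × EuclideanSpace ℝ (Fin d)) × ℝ =>
        g (p.1.2 + p.2 • (p.1.1 - p.1.2))) :=
      hgmeas.comp ((continuous_fst.snd.add (continuous_snd.smul
        (continuous_fst.fst.sub continuous_fst.snd))).measurable)
    exact hΦ.stronglyMeasurable.integral_prod_right'
  have hT2 : StronglyMeasurable (fun q : EuclideanSpace ℝ (Fin d) × ℝ =>
      ∫ w in ball y ρ, g (w + q.2 • (q.1 - w))) := by
    have hΦ : Measurable (fun p : (EuclideanSpace ℝ (Fin d) × ℝ) × EuclideanSpace ℝ (Fin d) =>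
        g (p.2 + p.1.2 • (p.1.1 - p.2))) :=
      hgmeas.comp ((continuous_snd.add (continuous_fst.snd.smul
        (continuous_fst.fst.sub continuous_snd))).measurable)
    exact hΦ.stronglyMeasurable.integral_prod_right'
  have hT3 : StronglyMeasurable (fun z : EuclideanSpace ℝ (Fin d) =>
      ∫ w in ball y ρ, ∫ t in Ioc (0:ℝ) 1, g (w + t • (z - w))) :=
    hT1.integral_prod_right'
  have hTbound : ∀ (z w : EuclideanSpace ℝ (Fin d)),
      ‖∫ t in Ioc (0:ℝ) 1, g (w + t • (z - w))‖ ≤ M := by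
    intro z w
    have h := norm_integral_le_of_norm_le_const (μ := volume.restrict (Ioc (0:ℝ) 1))
      (f := fun t => g (w + t • (z - w))) (C := M)
      (Filter.Eventually.of_forall fun t => hgnorm _)
    simpa using h
  -- swap 1 : for every z
  have swap1 : ∀ z : EuclideanSpace ℝ (Fin d),
      (∫ w in ball y ρ, ∫ t in Ioc (0:ℝ) 1, g (w + t • (z - w)))
        = ∫ t in Ioc (0:ℝ) 1, ∫ w in ball y ρ, g (w + t • (z - w)) := by
    intro z
    apply integral_integral_swap
    apply Integrable.mono' (integrable_const M)
    · exact (hgmeas.comp ((continuous_fst.add (continuous_snd.smul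
        (continuous_const.sub continuous_fst))).measurable)).aestronglyMeasurable
    · exact Filter.Eventually.of_forall fun p => hgnorm _
  -- swap 2 : z with t
  have swap2 : (∫ z in ball x R, ∫ t in Ioc (0:ℝ) 1, ∫ w in ball y ρ, g (w + t • (z - w)))
      = ∫ t in Ioc (0:ℝ) 1, ∫ z in ball x R, ∫ w in ball y ρ, g (w + t • (z - w)) := by
    apply integral_integral_swap
    apply Integrable.mono' (integrable_const (M * (volume (ball y ρ)).toReal))
    · exact hT2.aestronglyMeasurable
    · refine Filter.Eventually.of_forall fun q => ?_
      have h := norm_integral_le_of_norm_le_const (μ := volume.restrict (ball y ρ))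
        (f := fun w => g (w + q.2 • (q.1 - w))) (C := M)
        (Filter.Eventually.of_forall fun w => hgnorm _)
      simpa [Measure.restrict_apply_univ, Measure.real, Function.uncurry] using h
  -- per-t bound
  have St : ∀ t ∈ Ioc (0:ℝ) 1,
      (∫ z in ball x R, ∫ w in ball y ρ, g (w + t • (z - w)))
        ≤ 2^d * ((volume (ball x R)).toReal * J) := by
    intro t ht
    rcases le_or_gt t (1/2) with h₁ | h₁
    · have inner : ∀ z : EuclideanSpace ℝ (Fin d),
          (∫ w in ball y ρ, g (w + t • (z - w))) ≤ 2^d * J := by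
        intro z
        calc (∫ w in ball y ρ, g (w + t • (z - w)))
            = ∫ w in ball y ρ, g (t • z + (1-t) • w) :=
              setIntegral_congr_fun measurableSet_ball (fun w _ => by rw [rearr w z t])
          _ ≤ 2^d * J := setcv _ _ _ (by linarith) (by linarith [ht.1])
      calc (∫ z in ball x R, ∫ w in ball y ρ, g (w + t • (z - w)))
          ≤ ∫ _z in ball x R, (2^d * J) :=
            integral_mono_of_nonneg
              (Filter.Eventually.of_forall fun z => integral_nonneg fun w => hg0 _)
              (integrable_const _) (Filter.Eventually.of_forall inner)
        _ = (volume (ball x R)).toReal * (2^d * J) := by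
            rw [setIntegral_const, smul_eq_mul]; rfl
        _ = 2^d * ((volume (ball x R)).toReal * J) := by ring
    · have swap3 : (∫ z in ball x R, ∫ w in ball y ρ, g (w + t • (z - w)))
          = ∫ w in ball y ρ, ∫ z in ball x R, g (w + t • (z - w)) := by
        apply integral_integral_swap
        apply Integrable.mono' (integrable_const M)
        · exact (show Measurable (fun p : EuclideanSpace ℝ (Fin d) × EuclideanSpace ℝ (Fin d) =>
            g (p.2 + t • (p.1 - p.2))) from hgmeas.comp (by fun_prop)).aestronglyMeasurable
        · exact Filter.Eventually.of_forall fun p => hgnorm _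
      rw [swap3]
      have inner : ∀ w : EuclideanSpace ℝ (Fin d),
          (∫ z in ball x R, g (w + t • (z - w))) ≤ 2^d * J := by
        intro w
        calc (∫ z in ball x R, g (w + t • (z - w)))
            = ∫ z in ball x R, g ((1-t) • w + t • z) :=
              setIntegral_congr_fun measurableSet_ball
                (fun z _ => by rw [rearr w z t, add_comm])
          _ ≤ 2^d * J := setcv _ _ _ (by linarith) ht.2
      calc (∫ w in ball y ρ, ∫ z in ball x R, g (w + t • (z - w)))
          ≤ ∫ _w in ball y ρ, (2^d * J) :=
            integral_mono_of_nonneg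
              (Filter.Eventually.of_forall fun w => integral_nonneg fun z => hg0 _)
              (integrable_const _) (Filter.Eventually.of_forall inner)
        _ = (volume (ball y ρ)).toReal * (2^d * J) := by
            rw [setIntegral_const, smul_eq_mul]; rfl
        _ ≤ (volume (ball x R)).toReal * (2^d * J) :=
            mul_le_mul_of_nonneg_right hvol_le (by positivity)
        _ = 2^d * ((volume (ball x R)).toReal * J) := by ring
  -- triple integral bound
  have main3 : (∫ z in ball x R, ∫ w in ball y ρ, ∫ t in Ioc (0:ℝ) 1, g (w + t • (z - w)))
      ≤ 2^d * ((volume (ball x R)).toReal * J) := by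
    have e1 : (∫ z in ball x R, ∫ w in ball y ρ, ∫ t in Ioc (0:ℝ) 1, g (w + t • (z - w)))
        = ∫ z in ball x R, ∫ t in Ioc (0:ℝ) 1, ∫ w in ball y ρ, g (w + t • (z - w)) :=
      integral_congr_ae (Filter.Eventually.of_forall fun z => swap1 z)
    rw [e1, swap2]
    calc (∫ t in Ioc (0:ℝ) 1, ∫ z in ball x R, ∫ w in ball y ρ, g (w + t • (z - w)))
        ≤ ∫ _t in Ioc (0:ℝ) 1, (2^d * ((volume (ball x R)).toReal * J)) := by
          apply integral_mono_of_nonneg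
            (Filter.Eventually.of_forall fun t =>
              integral_nonneg fun z => integral_nonneg fun w => hg0 _)
            (integrable_const _)
          rw [Filter.EventuallyLE, ae_restrict_iff' measurableSet_Ioc]
          exact Filter.Eventually.of_forall St
      _ = 2^d * ((volume (ball x R)).toReal * J) := by
          rw [setIntegral_const, Measure.real, Real.volume_Ioc]
          norm_num
  -- second main step
  have main2 : (∫ z in ball x R, ∫ w in ball y ρ, (v z - v w)^2)
      ≤ 4*R^2 * ∫ z in ball x R, ∫ w in ball y ρ, ∫ t in Ioc (0:ℝ) 1, g (w + t • (z - w)) := by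
    rw [← integral_const_mul]
    apply integral_mono_of_nonneg
      (Filter.Eventually.of_forall fun z => integral_nonneg fun w => sq_nonneg _)
    · apply Integrable.mono' (integrable_const (4*R^2 * (M * (volume (ball y ρ)).toReal)))
      · exact hT3.aestronglyMeasurable.const_mul _
      · refine Filter.Eventually.of_forall fun z => ?_
        rw [Real.norm_eq_abs, abs_mul, abs_of_nonneg (by positivity : (0:ℝ) ≤ 4*R^2)]
        apply mul_le_mul_of_nonneg_left _ (by positivity)
        have h := norm_setIntegral_le_of_norm_le_const (μ := volume) (s := ball y ρ)
          (f := fun w => ∫ t in Ioc (0:ℝ) 1, g (w + t • (z - w))) (C := M)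
          measure_ball_lt_top (fun w _ => hTbound z w)
        rw [Real.norm_eq_abs] at h
        exact h
    · rw [Filter.EventuallyLE, ae_restrict_iff' measurableSet_ball]
      refine Filter.Eventually.of_forall fun z hz => ?_
      rw [← integral_const_mul]
      apply integral_mono_of_nonneg
        (Filter.Eventually.of_forall fun w => sq_nonneg _)
      · apply Integrable.mono' (integrable_const (4*R^2 * M))
        · exact ((hT1.comp_measurable (measurable_prodMk_left
            (x := z))).aestronglyMeasurable.const_mul _)
        · refine Filter.Eventually.of_forall fun w => ?_
          rw [Real.norm_eq_abs, abs_mul, abs_of_nonneg (by positivity : (0:ℝ) ≤ 4*R^2)]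
          apply mul_le_mul_of_nonneg_left _ (by positivity)
          have := hTbound z w
          rwa [Real.norm_eq_abs] at this
      · rw [Filter.EventuallyLE, ae_restrict_iff' measurableSet_ball]
        exact Filter.Eventually.of_forall fun w hw => P z (hBRK hz) w (hBρK hw)
  -- first main step
  obtain ⟨Mv, hMv⟩ := hKcomp.exists_bound_of_continuousOn (hvU.mono hKU)
  have main1 : (∫ z in ball x R, (v z - ⨍ w in ball y ρ, v w)^2)
      ≤ (volume (ball y ρ)).toReal⁻¹ * ∫ z in ball x R, ∫ w in ball y ρ, (v z - v w)^2 := by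
    rw [← integral_const_mul]
    apply integral_mono_of_nonneg (Filter.Eventually.of_forall fun z => sq_nonneg _)
    · have hprod : AEStronglyMeasurable (fun p :
          EuclideanSpace ℝ (Fin d) × EuclideanSpace ℝ (Fin d) => (v p.1 - v p.2)^2)
          ((volume.restrict (ball x R)).prod (volume.restrict (ball y ρ))) := by
        rw [Measure.prod_restrict]
        apply ContinuousOn.aestronglyMeasurable _ (measurableSet_ball.prod measurableSet_ball)
        exact ((hvU.comp continuous_fst.continuousOn fun p hp => hKU (hBRK hp.1)).sub
          (hvU.comp continuous_snd.continuousOn fun p hp => hKU (hBρK hp.2))).pow 2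
      apply Integrable.mono' (integrable_const ((volume (ball y ρ)).toReal⁻¹ *
        ((2*(|Mv|+1))^2 * (volume (ball y ρ)).toReal)))
      · exact hprod.integral_prod_right'.const_mul _
      · rw [ae_restrict_iff' measurableSet_ball]
        refine Filter.Eventually.of_forall fun z hz => ?_
        rw [Real.norm_eq_abs, abs_mul,
          abs_of_nonneg (by positivity : (0:ℝ) ≤ (volume (ball y ρ)).toReal⁻¹)]
        apply mul_le_mul_of_nonneg_left _ (by positivity)
        have hb : ∀ w ∈ ball y ρ, ‖(v z - v w)^2‖ ≤ (2*(|Mv|+1))^2 := by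
          intro w hw
          have h1 : ‖v z‖ ≤ Mv := hMv z (hBRK hz)
          have h2 : ‖v w‖ ≤ Mv := hMv w (hBρK hw)
          have h3 : ‖v z - v w‖ ≤ 2*(|Mv|+1) := by
            have := le_abs_self Mv
            calc ‖v z - v w‖ ≤ ‖v z‖ + ‖v w‖ := norm_sub_le _ _
              _ ≤ 2*(|Mv|+1) := by linarith
          calc ‖(v z - v w)^2‖ = ‖v z - v w‖^2 := by
                rw [Real.norm_eq_abs, Real.norm_eq_abs, sq_abs, abs_of_nonneg (sq_nonneg _)]
            _ ≤ (2*(|Mv|+1))^2 := pow_le_pow_left₀ (norm_nonneg _) h3 2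
        have hm2 : AEStronglyMeasurable (fun w => (v z - v w)^2)
            (volume.restrict (ball y ρ)) := by
          apply ContinuousOn.aestronglyMeasurable _ measurableSet_ball
          exact ((continuousOn_const.sub ((hvU.mono (hsub.trans hKU)).mono
            ball_subset_closedBall)).pow 2)
        have h := norm_setIntegral_le_of_norm_le_const (μ := volume) (s := ball y ρ)
          measure_ball_lt_top hb
        rw [Real.norm_eq_abs] at h
        exact h
    · rw [Filter.EventuallyLE, ae_restrict_iff' measurableSet_ball]
      exact Filter.Eventually.of_forall fun z hz => Q z (hBRK hz)
  -- volume ratio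
  have ratio : (volume (ball y ρ)).toReal⁻¹ * (volume (ball x R)).toReal ≤ (θ^d)⁻¹ := by
    have hbR : volume (ball x R) =
        ENNReal.ofReal (R ^ d) * volume (ball (0:EuclideanSpace ℝ (Fin d)) 1) := by
      rw [Measure.addHaar_ball volume x hR.le, finrank_euclideanSpace_fin]
    have hbρ : volume (ball y ρ) =
        ENNReal.ofReal (ρ ^ d) * volume (ball (0:EuclideanSpace ℝ (Fin d)) 1) := by
      rw [Measure.addHaar_ball volume y hρ.le, finrank_euclideanSpace_fin]
    have hc0 : 0 < (volume (ball (0:EuclideanSpace ℝ (Fin d)) 1)).toReal :=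
      ENNReal.toReal_pos (measure_ball_pos _ _ one_pos).ne' measure_ball_lt_top.ne
    rw [hbR, hbρ, ENNReal.toReal_mul, ENNReal.toReal_mul,
      ENNReal.toReal_ofReal (by positivity), ENNReal.toReal_ofReal (by positivity)]
    set c0 := (volume (ball (0:EuclideanSpace ℝ (Fin d)) 1)).toReal with hc0def
    have key : θ^d * R^d ≤ ρ^d := by
      rw [← mul_pow]; exact pow_le_pow_left₀ (by positivity) hθR d
    rw [show (ρ^d * c0)⁻¹ * (R^d * c0) = R^d / ρ^d by field_simp]
    rw [div_le_iff₀ (by positivity : (0:ℝ) < ρ^d)]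
    calc R^d = (θ^d)⁻¹ * (θ^d * R^d) := by field_simp
      _ ≤ (θ^d)⁻¹ * ρ^d := mul_le_mul_of_nonneg_left key (by positivity)
  -- conclusion
  rw [hJeq]
  calc (∫ z in ball x R, (v z - ⨍ w in ball y ρ, v w)^2)
      ≤ (volume (ball y ρ)).toReal⁻¹ *
          ∫ z in ball x R, ∫ w in ball y ρ, (v z - v w)^2 := main1
    _ ≤ (volume (ball y ρ)).toReal⁻¹ * (4*R^2 *
          ∫ z in ball x R, ∫ w in ball y ρ, ∫ t in Ioc (0:ℝ) 1, g (w + t • (z - w))) :=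
        mul_le_mul_of_nonneg_left main2 (by positivity)
    _ ≤ (volume (ball y ρ)).toReal⁻¹ *
          (4*R^2 * (2^d * ((volume (ball x R)).toReal * J))) :=
        mul_le_mul_of_nonneg_left
          (mul_le_mul_of_nonneg_left main3 (by positivity)) (by positivity)
    _ = (4 * 2^d) * ((volume (ball y ρ)).toReal⁻¹ * (volume (ball x R)).toReal) *
          (R^2 * J) := by ring
    _ ≤ (4 * 2^d) * (θ^d)⁻¹ * (R^2 * J) :=
        mul_le_mul_of_nonneg_right (mul_le_mul_of_nonneg_left ratio (by positivity))
          (mul_nonneg (by positivity) hJ0)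
    _ = 2^(d+2)/θ^d * R^2 * J := by
        rw [pow_add]; field_simp; ring
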